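/- Let g : ℝ≥0 → ℝ be defined by g(p) = (a² p + q) r / (a² p + q + r) with q > 0, r > 0, a ∈ ℝ. Then g is monotone nondecreasing on [0, ∞), and if |a| < 1 then g has a unique fixed point p* ≥ 0 (the unique nonnegative root of a² p² + (q + r − a² r) p − q r = 0). -/

import Mathlib

/-- The scalar Riccati map g(p) = (a²p+q)r/(a²p+q+r) is monotone nondecreasing
on [0,∞), and for |a| < 1 has a unique nonnegative fixed point, characterized
as the unique nonnegative root of a²p² + (q + r − a²r)p − qr = 0. -/
theorem riccati_map_monotone_fixed_point (a q r : ℝ) (hq : 0 < q) (hr : 0 < r)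
    (g : ℝ → ℝ)
    (hg : ∀ p, g p = (a ^ 2 * p + q) * r / (a ^ 2 * p + q + r)) :
    MonotoneOn g (Set.Ici 0) ∧
    (|a| < 1 →
      (∃! p : ℝ, 0 ≤ p ∧ g p = p) ∧
      ∀ p : ℝ, 0 ≤ p →
        (g p = p ↔ a ^ 2 * p ^ 2 + (q + r - a ^ 2 * r) * p - q * r = 0)) := by
  have hden : ∀ p : ℝ, 0 ≤ p → 0 < a ^ 2 * p + q + r := by
    intro p hp
    nlinarith [mul_nonneg (sq_nonneg a) hp]
  constructor
  · intro x hx y hy hxy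
    simp only [Set.mem_Ici] at hx hy
    rw [hg, hg, div_le_div_iff₀ (hden x hx) (hden y hy)]
    nlinarith [mul_nonneg (mul_nonneg (sq_nonneg a) (mul_pos hr hr).le)
      (sub_nonneg.2 hxy)]
  · intro ha
    have ha2 : a ^ 2 < 1 := by
      rw [← sq_abs]; nlinarith [abs_nonneg a]
    have hiff : ∀ p : ℝ, 0 ≤ p →
        (g p = p ↔ a ^ 2 * p ^ 2 + (q + r - a ^ 2 * r) * p - q * r = 0) := by
      intro p hp
      rw [hg, div_eq_iff (hden p hp).ne']
      constructor <;> intro h <;> nlinarith [h]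
    refine ⟨?_, hiff⟩
    -- existence via IVT
    set f : ℝ → ℝ := fun p => a ^ 2 * p ^ 2 + (q + r - a ^ 2 * r) * p - q * r with hf
    have hc : 0 < q + r - a ^ 2 * r := by nlinarith
    set M : ℝ := q * r / (q + r - a ^ 2 * r) with hM
    have hM0 : 0 ≤ M := le_of_lt (div_pos (mul_pos hq hr) hc)
    have hfM : 0 ≤ f M := by
      have : (q + r - a ^ 2 * r) * M = q * r := by
        rw [hM, mul_div_assoc', mul_div_right_comm, div_self hc.ne', one_mul]
      simp only [hf]
      nlinarith [mul_nonneg (sq_nonneg a) (sq_nonneg M)]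
    have hf0 : f 0 ≤ 0 := by simp [hf]; positivity
    have hcont : ContinuousOn f (Set.Icc 0 M) := by
      apply Continuous.continuousOn; fun_prop
    have hiv := intermediate_value_Icc hM0 hcont
    have h0mem : (0 : ℝ) ∈ Set.Icc (f 0) (f M) := ⟨hf0, hfM⟩
    obtain ⟨p, hpmem, hfp⟩ := hiv h0mem
    have hpnn : 0 ≤ p := hpmem.1
    refine ⟨p, ⟨hpnn, (hiff p hpnn).2 hfp⟩, ?_⟩
    rintro y ⟨hy, hgy⟩
    have hfy : f y = 0 := (hiff y hy).1 hgy
    rcases lt_trichotomy y p with h | h | h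
    · exfalso; simp only [hf] at hfy hfp
      nlinarith [mul_nonneg (sq_nonneg a) (mul_nonneg (add_nonneg hy hpnn) (sub_nonneg.2 h.le))]
    · exact h
    · exfalso; simp only [hf] at hfy hfp
      nlinarith [mul_nonneg (sq_nonneg a) (mul_nonneg (add_nonneg hy hpnn) (sub_nonneg.2 h.le))]
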